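/- Let F∗A be a twisted group algebra of a free abelian group A of rank n over a field F with basis {x₁, …, x_n}. Let M be a finitely generated right F∗A-module with gk(M) = r, 0 < r < n, such that M is not F∗⟨x₁,…,x_r⟩-torsion. Let S = F∗⟨x₁,…,x_r⟩∖{0}, let D be the quotient division ring of F∗⟨x₁,…,x_r⟩, so that the Ore localization (F∗A)S⁻¹ is a crossed product D∗⟨x_{r+1},…,x_n⟩. Then the localization MS⁻¹ is a nonzero D∗⟨x_{r+1},…,x_n⟩-module that is finite dimensional as a D-vector space. -/

import Mathlib

open MulOpposite

universe u v

/-- `KdimLT R k M` means the (Gabriel–Rentschler) Krull dimension of the `R`-module `M`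
is `< k` (i.e. `≤ k - 1`), where `KdimLT R 0 M` means `M = 0`. -/
def KdimLT (R : Type u) [Ring R] : ℕ → ModuleCat.{u} R → Prop
  | 0, M => Subsingleton M
  | k+1, M => ∀ f : ℕ → Submodule R M, Antitone f → ∃ N, ∀ i ≥ N,
      KdimLT R k (ModuleCat.of R (↥(f i) ⧸ Submodule.comap (f i).subtype (f (i+1))))

/-- `IsKrullDim R d` : the ring `R` has (Gabriel–Rentschler) Krull dimension exactly `d`. -/
def IsKrullDim (R : Type u) [Ring R] (d : ℕ) : Prop :=
  KdimLT R (d + 1) (ModuleCat.of R R) ∧ ∀ d' : ℕ, KdimLT R (d' + 1) (ModuleCat.of R R) → d ≤ d'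

/-- `PdimLE R k M` : the projective dimension of `M` is at most `k`.  (By Schanuel's lemma
this recursive definition, which uses the canonical free cover at every stage, agrees with
the usual definition of projective dimension.) -/
def PdimLE (R : Type u) [Ring R] : ℕ → ModuleCat.{u} R → Prop
  | 0, M => Module.Projective R M
  | k+1, M => PdimLE R k
      (ModuleCat.of R (LinearMap.ker (Finsupp.linearCombination R (id : M → M))))

/-- `IsGlobalDim R d` : the ring `R` has global dimension exactly `d`. -/
def IsGlobalDim (R : Type u) [Ring R] (d : ℕ) : Prop :=
  (∀ M : ModuleCat.{u} R, PdimLE R d M) ∧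
    ∀ d' : ℕ, (∀ M : ModuleCat.{u} R, PdimLE R d' M) → d ≤ d'

/-- By a theorem of McConnell and Pettit the Krull dimension and the global dimension of a
quantum torus (twisted group algebra of a f.g. free abelian group) coincide;
`IsDimension R d` says that `d` is this common value `dim R`. -/
def IsDimension (R : Type u) [Ring R] (d : ℕ) : Prop :=
  IsKrullDim R d ∧ IsGlobalDim R d

/-- `IsTwistedGroupAlgebra F R bar τ` : the `F`-algebra `R` is a twisted group algebra
`F∗A` of the free abelian group `A = ℤⁿ` over the field `F`: the units `bar a` (`a ∈ A`)
form an `F`-basis of `R` and multiply according to the 2-cocycle `τ` with values in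
`F∖{0}`. -/
structure IsTwistedGroupAlgebra (F : Type u) [Field F] {n : ℕ} (R : Type v) [Ring R]
    [Algebra F R] (bar : (Fin n → ℤ) → Rˣ) (τ : (Fin n → ℤ) → (Fin n → ℤ) → F) : Prop where
  τ_ne_zero : ∀ a b, τ a b ≠ 0
  cocycle : ∀ a b c, τ a b * τ (a + b) c = τ b c * τ a (b + c)
  mul_bar : ∀ a b, (bar a : R) * bar b = τ a b • (bar (a + b) : R)
  repr_unique : ∀ r : R, ∃! c : (Fin n → ℤ) →₀ F, r = c.sum fun a f => f • (bar a : R)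
/-- The `F`-span of `{bar b : b ∈ B}` in `R`; for a subgroup `B ≤ A` this is the
twisted group algebra `F∗B` sitting inside `F∗A`. -/
def tgaSpan (F : Type u) [Field F] {n : ℕ} {R : Type v} [Ring R] [Algebra F R]
    (bar : (Fin n → ℤ) → Rˣ) (B : AddSubgroup (Fin n → ℤ)) : Submodule F R :=
  Submodule.span F ((fun a => (bar a : R)) '' B)

/-- A right `R`-module `M` is `F∗B`-torsion if every element of `M` is annihilated by a
nonzero element of `F∗B`. -/
def IsTorsionOverSub (F : Type u) [Field F] {n : ℕ} {R : Type v} [Ring R] [Algebra F R]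
    (bar : (Fin n → ℤ) → Rˣ) (B : AddSubgroup (Fin n → ℤ)) (M : Type*) [AddCommGroup M]
    [Module Rᵐᵒᵖ M] : Prop :=
  ∀ m : M, ∃ β ∈ tgaSpan F bar B, β ≠ 0 ∧ op β • m = 0

/-- The rank of a subgroup of the free abelian group `ℤⁿ`. -/
noncomputable def rk {n : ℕ} (B : AddSubgroup (Fin n → ℤ)) : ℕ :=
  Module.finrank ℤ B

/-- The Gelfand–Kirillov dimension (measured over `F`) of a finitely generated right module
over the twisted group algebra `F∗A`, via the Brookes–Groves characterization: it is the
supremum of the ranks of the subgroups `B ≤ A` such that `M` is not `F∗B`-torsion. -/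
noncomputable def gkTGA (F : Type u) [Field F] {n : ℕ} {R : Type v} [Ring R] [Algebra F R]
    (bar : (Fin n → ℤ) → Rˣ) (M : Type*) [AddCommGroup M] [Module Rᵐᵒᵖ M] : ℕ :=
  sSup { r : ℕ | ∃ B : AddSubgroup (Fin n → ℤ),
    ¬ IsTorsionOverSub F bar B M ∧ rk B = r }

/-- The subgroup `⟨x₁, …, x_r⟩` of `ℤⁿ` generated by the first `r` standard basis
vectors. -/
def stdSub (n r : ℕ) : AddSubgroup (Fin n → ℤ) where
  carrier := { x | ∀ i : Fin n, r ≤ (i : ℕ) → x i = 0 }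
  zero_mem' := fun i _ => rfl
  add_mem' := by
    intro a b ha hb i hi
    simp [ha i hi, hb i hi]
  neg_mem' := by
    intro a ha i hi
    simp [ha i hi]

/-- The set `C∖{0}` used below, where `C = F∗⟨x₁,…,x_r⟩`, is an Ore set in `F∗A`;
`IsOreLocalizationData` records that `φ : R →+* R'` is a right Ore localization of
`R = F∗A` at `S = C∖{0}`: elements of `S` become invertible, every element of `R'` is a
right fraction `φ(a)·φ(s)⁻¹`, and the kernel of `φ` is the `S`-torsion of `R`. -/
structure IsOreLocalizationData {R : Type u} [Ring R] {R' : Type v} [Ring R']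
    (C : Set R) (φ : R →+* R') : Prop where
  isUnit : ∀ s ∈ C, s ≠ 0 → IsUnit (φ s)
  surj : ∀ y : R', ∃ (a : R) (s : R), s ∈ C ∧ s ≠ 0 ∧ y = φ a * Ring.inverse (φ s)
  ker : ∀ a : R, φ a = 0 ↔ ∃ s ∈ C, s ≠ 0 ∧ a * s = 0

/-- `IsOreModuleLocalizationData C φ ψ` : the right `R'`-module `M'` together with
`ψ : M →+ M'` is the localization `M S⁻¹` of the right `R`-module `M` at `S = C∖{0}`:
`ψ` is `φ`-semilinear, every element of `M'` is a fraction `ψ(m)·φ(s)⁻¹`, and the kernel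
of `ψ` is the `S`-torsion submodule of `M`. -/
structure IsOreModuleLocalizationData {R : Type u} [Ring R] {R' : Type v} [Ring R']
    (C : Set R) (φ : R →+* R') {M : Type u} [AddCommGroup M] [Module Rᵐᵒᵖ M]
    {M' : Type v} [AddCommGroup M'] [Module R'ᵐᵒᵖ M'] (ψ : M →+ M') : Prop where
  semilinear : ∀ (a : R) (m : M), ψ (op a • m) = op (φ a) • ψ m
  surj : ∀ m' : M', ∃ (m : M) (s : R), s ∈ C ∧ s ≠ 0 ∧
    m' = op (Ring.inverse (φ s)) • ψ m
  ker : ∀ m : M, ψ m = 0 ↔ ∃ s ∈ C, s ≠ 0 ∧ op s • m = 0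

/-- The quotient division ring `D = F(x₁,…,x_r)` of `C = F∗⟨x₁,…,x_r⟩`, realized as the
set of fractions `φ(c)·φ(s)⁻¹` (`c, s ∈ C`, `s ≠ 0`) inside the localization `R'`. -/
def quotDivisionRing {R : Type u} [Ring R] {R' : Type v} [Ring R'] (C : Set R)
    (φ : R →+* R') : Set R' :=
  { y | ∃ c ∈ C, ∃ s ∈ C, s ≠ 0 ∧ y = φ c * Ring.inverse (φ s) }

/-! ### Auxiliary development -/

section TGAAux

variable {F : Type u} [Field F] {n : ℕ} {R : Type v} [Ring R] [Algebra F R]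
  {bar : (Fin n → ℤ) → Rˣ} {τ : (Fin n → ℤ) → (Fin n → ℤ) → F}

/-- The `F`-basis of `R` given by the units `bar a`. -/
noncomputable def tgaBasis (h : IsTwistedGroupAlgebra F R bar τ) :
    Module.Basis (Fin n → ℤ) F R := by
  refine Module.Basis.mk (v := fun a => (bar a : R)) ?_ ?_
  · rw [linearIndependent_iff]
    intro l hl
    obtain ⟨c₀, hc₀, huniq⟩ := h.repr_unique 0
    rw [Finsupp.linearCombination_apply] at hl
    have h1 : l = c₀ := huniq l hl.symm
    have h2 : (0 : (Fin n → ℤ) →₀ F) = c₀ := huniq 0 (by simp [Finsupp.sum_zero_index])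
    rw [h1, ← h2]
  · rintro x -
    obtain ⟨c, hc, -⟩ := h.repr_unique x
    rw [hc]
    exact Submodule.sum_mem _ fun a _ => Submodule.smul_mem _ _
      (Submodule.subset_span ⟨a, rfl⟩)

lemma tgaBasis_apply (h : IsTwistedGroupAlgebra F R bar τ) (a : Fin n → ℤ) :
    tgaBasis h a = (bar a : R) := by
  simp [tgaBasis]

lemma coe_tgaBasis (h : IsTwistedGroupAlgebra F R bar τ) :
    ⇑(tgaBasis h) = fun a => (bar a : R) := funext (tgaBasis_apply h)

lemma mem_tgaSpan_iff (h : IsTwistedGroupAlgebra F R bar τ) (B : AddSubgroup (Fin n → ℤ))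
    (x : R) : x ∈ tgaSpan F bar B ↔ ∀ a ∈ ((tgaBasis h).repr x).support, a ∈ B := by
  have : tgaSpan F bar B = Submodule.span F (⇑(tgaBasis h) '' B) := by
    rw [coe_tgaBasis]; rfl
  rw [this, Module.Basis.mem_span_image]
  constructor
  · intro hs a ha; exact hs ha
  · intro hs a ha; exact hs a ha

lemma bar_mem_tgaSpan {B : AddSubgroup (Fin n → ℤ)} {a : Fin n → ℤ} (ha : a ∈ B) :
    (bar a : R) ∈ tgaSpan F bar B :=
  Submodule.subset_span ⟨a, ha, rfl⟩

lemma mul_expand (h : IsTwistedGroupAlgebra F R bar τ) (x y : R) :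
    x * y = ∑ a ∈ ((tgaBasis h).repr x).support, ∑ c ∈ ((tgaBasis h).repr y).support,
      (((tgaBasis h).repr x) a * ((tgaBasis h).repr y) c * τ a c) • (bar (a + c) : R) := by
  set b := tgaBasis h with hb
  conv_lhs => rw [← b.linearCombination_repr x, ← b.linearCombination_repr y]
  rw [Finsupp.linearCombination_apply, Finsupp.linearCombination_apply,
    Finsupp.sum, Finsupp.sum, Finset.sum_mul_sum]
  refine Finset.sum_congr rfl fun a _ => Finset.sum_congr rfl fun c _ => ?_
  rw [coe_tgaBasis h]
  rw [smul_mul_assoc, mul_smul_comm, h.mul_bar, smul_smul, smul_smul, mul_assoc]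

lemma repr_mul (h : IsTwistedGroupAlgebra F R bar τ) (x y : R) :
    (tgaBasis h).repr (x * y) = ∑ a ∈ ((tgaBasis h).repr x).support,
      ∑ c ∈ ((tgaBasis h).repr y).support,
      Finsupp.single (a + c) (((tgaBasis h).repr x) a * ((tgaBasis h).repr y) c * τ a c) := by
  set b := tgaBasis h with hb
  conv_lhs => rw [mul_expand h x y]
  rw [map_sum]
  refine Finset.sum_congr rfl fun a _ => ?_
  rw [map_sum]
  refine Finset.sum_congr rfl fun c _ => ?_
  have : (bar (a + c) : R) = b (a + c) := (tgaBasis_apply h _).symm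
  rw [this, map_smul, b.repr_self, Finsupp.smul_single, smul_eq_mul, mul_one]

lemma support_mul (h : IsTwistedGroupAlgebra F R bar τ) (x y : R) {e : Fin n → ℤ}
    (he : e ∈ ((tgaBasis h).repr (x * y)).support) :
    ∃ a ∈ ((tgaBasis h).repr x).support, ∃ c ∈ ((tgaBasis h).repr y).support, e = a + c := by
  classical
  rw [repr_mul h x y] at he
  have h1 := Finsupp.support_finset_sum (s := ((tgaBasis h).repr x).support)
    (f := fun a => ∑ c ∈ ((tgaBasis h).repr y).support,
      Finsupp.single (a + c) (((tgaBasis h).repr x) a * ((tgaBasis h).repr y) c * τ a c)) he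
  rw [Finset.mem_biUnion] at h1
  obtain ⟨a, ha, hae⟩ := h1
  have h2 := Finsupp.support_finset_sum (s := ((tgaBasis h).repr y).support)
    (f := fun c => Finsupp.single (a + c) (((tgaBasis h).repr x) a * ((tgaBasis h).repr y) c * τ a c)) hae
  rw [Finset.mem_biUnion] at h2
  obtain ⟨c, hc, hce⟩ := h2
  have := Finsupp.support_single_subset hce
  rw [Finset.mem_singleton] at this
  exact ⟨a, ha, c, hc, this⟩

lemma repr_mul_uniqueAdd (h : IsTwistedGroupAlgebra F R bar τ) {x y : R} {a0 c0 : Fin n → ℤ}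
    (ha0 : a0 ∈ ((tgaBasis h).repr x).support) (hc0 : c0 ∈ ((tgaBasis h).repr y).support)
    (hu : UniqueAdd ((tgaBasis h).repr x).support ((tgaBasis h).repr y).support a0 c0) :
    ((tgaBasis h).repr (x * y)) (a0 + c0)
      = ((tgaBasis h).repr x) a0 * ((tgaBasis h).repr y) c0 * τ a0 c0 := by
  classical
  rw [repr_mul h x y]
  rw [Finsupp.finset_sum_apply]
  rw [Finset.sum_eq_single a0]
  · rw [Finsupp.finset_sum_apply, Finset.sum_eq_single c0]
    · rw [Finsupp.single_eq_same]
    · intro c hc hne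
      rw [Finsupp.single_apply, if_neg]
      intro hadd
      exact hne (hu ha0 hc hadd).2
    · intro habs; exact absurd hc0 habs
  · intro a ha hne
    rw [Finsupp.finset_sum_apply]
    refine Finset.sum_eq_zero fun c hc => ?_
    rw [Finsupp.single_apply, if_neg]
    intro hadd
    exact hne (hu ha hc hadd).1
  · intro habs; exact absurd ha0 habs

lemma tga_mul_ne_zero (h : IsTwistedGroupAlgebra F R bar τ) {x y : R}
    (hx : x ≠ 0) (hy : y ≠ 0) : x * y ≠ 0 := by
  set b := tgaBasis h with hb
  have hrx : (b.repr x).support.Nonempty := by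
    rw [Finsupp.support_nonempty_iff]
    intro h0; exact hx (by simpa using b.repr.injective (by simp [h0]))
  have hry : (b.repr y).support.Nonempty := by
    rw [Finsupp.support_nonempty_iff]
    intro h0; exact hy (by simpa using b.repr.injective (by simp [h0]))
  obtain ⟨a0, ha0, c0, hc0, hu⟩ := UniqueSums.uniqueAdd_of_nonempty hrx hry
  have hco := repr_mul_uniqueAdd h ha0 hc0 hu
  intro h0
  rw [h0] at hco
  simp only [map_zero, Finsupp.coe_zero, Pi.zero_apply] at hco
  have : (b.repr x) a0 * (b.repr y) c0 * τ a0 c0 ≠ 0 :=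
    mul_ne_zero (mul_ne_zero (Finsupp.mem_support_iff.1 ha0) (Finsupp.mem_support_iff.1 hc0))
      (h.τ_ne_zero a0 c0)
  exact this hco.symm

lemma bar_zero_eq (h : IsTwistedGroupAlgebra F R bar τ) :
    (bar 0 : R) = τ 0 0 • (1 : R) := by
  have h1 : (bar 0 : R) * bar 0 = τ 0 0 • (bar 0 : R) := by
    have := h.mul_bar 0 0; rwa [add_zero] at this
  calc (bar 0 : R) = ((bar 0 : R) * bar 0) * ↑(bar 0)⁻¹ := by
        rw [mul_assoc, Units.mul_inv, mul_one]
    _ = τ 0 0 • ((bar 0 : R) * ↑(bar 0)⁻¹) := by rw [h1, smul_mul_assoc]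
    _ = τ 0 0 • (1 : R) := by rw [Units.mul_inv]

lemma one_mem_tgaSpan (h : IsTwistedGroupAlgebra F R bar τ) (B : AddSubgroup (Fin n → ℤ)) :
    (1 : R) ∈ tgaSpan F bar B := by
  have h1 : (1 : R) = (τ 0 0)⁻¹ • (bar 0 : R) := by
    rw [bar_zero_eq h, smul_smul, inv_mul_cancel₀ (h.τ_ne_zero 0 0), one_smul]
  rw [h1]
  exact Submodule.smul_mem _ _ (bar_mem_tgaSpan B.zero_mem)

lemma tga_nontrivial (h : IsTwistedGroupAlgebra F R bar τ) : (1 : R) ≠ 0 := by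
  intro h10
  obtain ⟨c₀, hc₀, huniq⟩ := h.repr_unique 0
  have hsum : (0 : R) = (Finsupp.single (0 : Fin n → ℤ) (1 : F)).sum fun a f => f • (bar a : R) := by
    rw [Finsupp.sum_single_index (by simp), one_smul, bar_zero_eq h, h10, smul_zero]
  have h1 : (Finsupp.single (0 : Fin n → ℤ) (1 : F)) = c₀ := huniq _ hsum
  have h2 : (0 : (Fin n → ℤ) →₀ F) = c₀ := huniq 0 (by simp)
  rw [← h2] at h1
  exact one_ne_zero (Finsupp.single_eq_zero.1 h1)

lemma mul_mem_tgaSpan (h : IsTwistedGroupAlgebra F R bar τ) {B : AddSubgroup (Fin n → ℤ)}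
    {x y : R} (hx : x ∈ tgaSpan F bar B) (hy : y ∈ tgaSpan F bar B) :
    x * y ∈ tgaSpan F bar B := by
  rw [mem_tgaSpan_iff h] at hx hy ⊢
  intro e he
  obtain ⟨a, ha, c, hc, rfl⟩ := support_mul h x y he
  exact B.add_mem (hx a ha) (hy c hc)

lemma bar_comm (h : IsTwistedGroupAlgebra F R bar τ) (a c : Fin n → ℤ) :
    (bar a : R) * bar c = (τ a c * (τ c a)⁻¹) • ((bar c : R) * bar a) := by
  rw [h.mul_bar a c, h.mul_bar c a, smul_smul, add_comm a c, mul_assoc,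
    inv_mul_cancel₀ (h.τ_ne_zero c a), mul_one]

lemma conj_mem_tgaSpan (h : IsTwistedGroupAlgebra F R bar τ) {B : AddSubgroup (Fin n → ℤ)}
    (t : Fin n → ℤ) {x : R} (hx : x ∈ tgaSpan F bar B) :
    (bar t : R) * x * ↑(bar t)⁻¹ ∈ tgaSpan F bar B := by
  refine Submodule.span_induction ?_ ?_ ?_ ?_ hx
  · rintro _ ⟨c, hc, rfl⟩
    rw [bar_comm h t c, smul_mul_assoc, mul_assoc, Units.mul_inv, mul_one]
    exact Submodule.smul_mem _ _ (bar_mem_tgaSpan hc)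
  · simp
  · intro u v _ _ hu hv
    have : (bar t : R) * (u + v) * ↑(bar t)⁻¹
        = (bar t : R) * u * ↑(bar t)⁻¹ + (bar t : R) * v * ↑(bar t)⁻¹ := by
      rw [mul_add, add_mul]
    rw [this]; exact Submodule.add_mem _ hu hv
  · intro f u _ hu
    have : (bar t : R) * (f • u) * ↑(bar t)⁻¹ = f • ((bar t : R) * u * ↑(bar t)⁻¹) := by
      rw [mul_smul_comm, smul_mul_assoc]
    rw [this]; exact Submodule.smul_mem _ _ hu

lemma conj'_mem_tgaSpan (h : IsTwistedGroupAlgebra F R bar τ) {B : AddSubgroup (Fin n → ℤ)}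
    (t : Fin n → ℤ) {x : R} (hx : x ∈ tgaSpan F bar B) :
    (↑(bar t)⁻¹ : R) * x * bar t ∈ tgaSpan F bar B := by
  refine Submodule.span_induction ?_ ?_ ?_ ?_ hx
  · rintro _ ⟨c, hc, rfl⟩
    rw [mul_assoc, bar_comm h c t, mul_smul_comm, Units.inv_mul_cancel_left]
    exact Submodule.smul_mem _ _ (bar_mem_tgaSpan hc)
  · simp
  · intro u v _ _ hu hv
    have : (↑(bar t)⁻¹ : R) * (u + v) * bar t
        = (↑(bar t)⁻¹ : R) * u * bar t + (↑(bar t)⁻¹ : R) * v * bar t := by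
      rw [mul_add, add_mul]
    rw [this]; exact Submodule.add_mem _ hu hv
  · intro f u _ hu
    have : (↑(bar t)⁻¹ : R) * (f • u) * bar t = f • ((↑(bar t)⁻¹ : R) * u * bar t) := by
      rw [mul_smul_comm, smul_mul_assoc]
    rw [this]; exact Submodule.smul_mem _ _ hu

lemma conj_unit_ne_zero {u : Rˣ} {x : R} (hx : x ≠ 0) : (u : R) * x * ↑u⁻¹ ≠ 0 := by
  intro h0
  apply hx
  have : x = ↑u⁻¹ * ((u : R) * x * ↑u⁻¹) * u := by
    rw [mul_assoc ((u:R)) x, Units.inv_mul_cancel_left, mul_assoc, Units.inv_mul, mul_one]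
  rw [this, h0, mul_zero, zero_mul]

lemma repr_ne_zero_of_ne_zero (h : IsTwistedGroupAlgebra F R bar τ) {x : R} (hx : x ≠ 0) :
    ((tgaBasis h).repr x).support.Nonempty := by
  rw [Finsupp.support_nonempty_iff]
  intro h0
  exact hx (by simpa using (tgaBasis h).repr.injective (by simp [h0]))

/-- The "tail" of a lattice vector: the coordinates of index `≥ r`. -/
def tgaTl (r : ℕ) (a : Fin n → ℤ) : Fin n → ℤ := fun i => if (i : ℕ) < r then 0 else a i

lemma tgaTl_add (r : ℕ) (a c : Fin n → ℤ) :
    tgaTl r (a + c) = tgaTl r a + tgaTl r c := by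
  funext i
  simp only [tgaTl, Pi.add_apply]
  split_ifs <;> simp

lemma mem_stdSub_iff {r : ℕ} {a : Fin n → ℤ} :
    a ∈ stdSub n r ↔ ∀ i : Fin n, r ≤ (i : ℕ) → a i = 0 := Iff.rfl

lemma tgaTl_eq_zero_iff {r : ℕ} {a : Fin n → ℤ} :
    tgaTl r a = 0 ↔ a ∈ stdSub n r := by
  constructor
  · intro h0 i hi
    have := congrFun h0 i
    simpa [tgaTl, not_lt.2 hi, if_neg (not_lt.2 hi)] using this
  · intro ha
    funext i
    simp only [tgaTl, Pi.zero_apply]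
    split_ifs with hir
    · rfl
    · exact ha i (not_lt.1 hir)

lemma tga_left_cancel (h : IsTwistedGroupAlgebra F R bar τ) {r : ℕ} {s x : R}
    (hs : s ∈ tgaSpan F bar (stdSub n r)) (hs0 : s ≠ 0)
    (hsx : s * x ∈ tgaSpan F bar (stdSub n r)) : x ∈ tgaSpan F bar (stdSub n r) := by
  classical
  by_contra hxC
  rw [mem_tgaSpan_iff h] at hxC
  push_neg at hxC
  obtain ⟨a0, ha0, ha0B⟩ := hxC
  set b := tgaBasis h with hbdef
  set t0 := tgaTl r a0 with ht0def
  have ht0 : t0 ≠ 0 := fun h0 => ha0B (tgaTl_eq_zero_iff.1 h0)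
  set l : (Fin n → ℤ) →₀ F := (b.repr x).filter (fun a => tgaTl r a = t0) with hldef
  set x1 : R := Finsupp.linearCombination F ⇑b l with hx1def
  have hreprx1 : b.repr x1 = l := b.repr_linearCombination l
  have hx1 : x1 ≠ 0 := by
    intro h0
    have hl0 : l = 0 := by rw [← hreprx1, h0, map_zero]
    have hcond : tgaTl r a0 = t0 := rfl
    have hl : l a0 = b.repr x a0 := by
      rw [hldef, Finsupp.filter_apply, if_pos hcond]
    rw [hl0] at hl
    exact (Finsupp.mem_support_iff.1 ha0) hl.symm
  have hsupx1 : (b.repr x1).support ⊆ (b.repr x).support.filter (fun a => tgaTl r a = t0) := by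
    rw [hreprx1, hldef, Finsupp.support_filter]
  obtain ⟨c0, hc0⟩ := repr_ne_zero_of_ne_zero h (tga_mul_ne_zero h hs0 hx1)
  obtain ⟨a, ha, d, hd, hcd⟩ := support_mul h s x1 hc0
  have htc0 : tgaTl r c0 = t0 := by
    have h1 : tgaTl r a = 0 := tgaTl_eq_zero_iff.2 ((mem_tgaSpan_iff h _ s).1 hs a ha)
    have h2 : tgaTl r d = t0 := (Finset.mem_filter.1 (hsupx1 hd)).2
    rw [hcd, tgaTl_add, h1, h2, zero_add]
  set x2 := x - x1 with hx2def
  have hxsplit : s * x = s * x1 + s * x2 := by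
    rw [hx2def, ← mul_add, add_sub_cancel]
  have hreprx2 : b.repr x2 = b.repr x - l := by rw [hx2def, map_sub, hreprx1]
  have hx2c0 : b.repr (s * x2) c0 = 0 := by
    by_contra hne
    obtain ⟨a', ha', d', hd', hcd'⟩ := support_mul h s x2 (Finsupp.mem_support_iff.2 hne)
    have hd'sup : b.repr x2 d' ≠ 0 := Finsupp.mem_support_iff.1 hd'
    have hd'ne : tgaTl r d' ≠ t0 := by
      intro heq
      apply hd'sup
      rw [hreprx2, Finsupp.sub_apply, hldef, Finsupp.filter_apply, if_pos heq, sub_self]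
    apply hd'ne
    have h1 : tgaTl r a' = 0 := tgaTl_eq_zero_iff.2 ((mem_tgaSpan_iff h _ s).1 hs a' ha')
    rw [← htc0, hcd', tgaTl_add, h1, zero_add]
  have hfin : b.repr (s * x) c0 ≠ 0 := by
    rw [hxsplit, map_add, Finsupp.add_apply, hx2c0, add_zero]
    exact Finsupp.mem_support_iff.1 hc0
  have hc0B : c0 ∈ stdSub n r :=
    (mem_tgaSpan_iff h _ _).1 hsx c0 (Finsupp.mem_support_iff.2 hfin)
  exact ht0 (by rw [← htc0]; exact tgaTl_eq_zero_iff.2 hc0B)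

/-- The subgroup of `ℤⁿ` of vectors supported on a finite coordinate set `s`. -/
def coordSub (n : ℕ) (s : Finset (Fin n)) : AddSubgroup (Fin n → ℤ) where
  carrier := { x | ∀ i : Fin n, i ∉ s → x i = 0 }
  zero_mem' := fun i _ => rfl
  add_mem' := by
    intro a b ha hb i hi
    simp [ha i hi, hb i hi]
  neg_mem' := by
    intro a ha i hi
    simp [ha i hi]

lemma mem_coordSub_iff {s : Finset (Fin n)} {a : Fin n → ℤ} :
    a ∈ coordSub n s ↔ ∀ i : Fin n, i ∉ s → a i = 0 := Iff.rfl

/-- An additive equivalence between `coordSub n s` and `↥s → ℤ`. -/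
noncomputable def coordSubEquiv (s : Finset (Fin n)) : ↥(coordSub n s) ≃+ (↥s → ℤ) where
  toFun x i := (x : Fin n → ℤ) i
  invFun f := ⟨fun i => if hi : i ∈ s then f ⟨i, hi⟩ else 0, by
    intro i hi
    exact dif_neg hi⟩
  left_inv := by
    rintro ⟨x, hx⟩
    apply Subtype.ext
    funext i
    by_cases hi : i ∈ s
    · simp [hi]
    · simp [hi, hx i hi]
  right_inv := by
    intro f
    funext i
    rcases i with ⟨i, hi⟩
    exact dif_pos hi
  map_add' := by intros; rfl

lemma rk_coordSub (s : Finset (Fin n)) : rk (coordSub n s) = s.card := by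
  unfold rk
  rw [LinearEquiv.finrank_eq (coordSubEquiv s).toIntLinearEquiv, Module.finrank_pi ℤ]
  simp

lemma card_filter_lt (r : ℕ) (hrn : r ≤ n) :
    (Finset.univ.filter fun i : Fin n => (i : ℕ) < r).card = r := by
  have : (Finset.univ.filter fun i : Fin n => (i : ℕ) < r)
      = Finset.univ.map (Fin.castLEEmb hrn) := by
    ext i
    simp only [Finset.mem_filter, Finset.mem_map, Finset.mem_univ, true_and]
    constructor
    · intro hi
      exact ⟨⟨(i : ℕ), hi⟩, by ext; simp [Fin.castLEEmb, Fin.castLE]⟩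
    · rintro ⟨k, rfl⟩
      simp [Fin.castLEEmb, Fin.castLE]
    
  rw [this, Finset.card_map, Finset.card_univ, Fintype.card_fin]

/-- Coordinate set `{1, …, r, j}`. -/
def tgaIdx (r : ℕ) {n : ℕ} (j : Fin n) : Finset (Fin n) :=
  insert j (Finset.univ.filter fun i : Fin n => (i : ℕ) < r)

lemma card_tgaIdx {r : ℕ} {j : Fin n} (hj : r ≤ (j : ℕ)) (hrn : r ≤ n) :
    (tgaIdx r j).card = r + 1 := by
  unfold tgaIdx
  rw [Finset.card_insert_of_notMem, card_filter_lt r hrn]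
  simp only [Finset.mem_filter, Finset.mem_univ, true_and, not_lt]
  exact hj

lemma stdSub_le_coordSub_tgaIdx {r : ℕ} {j : Fin n} :
    stdSub n r ≤ coordSub n (tgaIdx r j) := by
  intro x hx i hi
  simp only [tgaIdx, Finset.mem_insert, Finset.mem_filter, Finset.mem_univ, true_and,
    not_or, not_lt] at hi
  exact hx i hi.2

lemma tgaSpan_mono {B B' : AddSubgroup (Fin n → ℤ)} (hBB : B ≤ B') :
    tgaSpan F (R := R) bar B ≤ tgaSpan F bar B' :=
  Submodule.span_mono (Set.image_mono hBB)

/-- decomposition of an element of `F∗⟨x₁,…,x_r,x_j⟩` as a Laurent polynomial in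
`bar (single j ·)` with coefficients in `F∗⟨x₁,…,x_r⟩`. -/
lemma tga_decomp (h : IsTwistedGroupAlgebra F R bar τ) {r : ℕ} (j : Fin n) {β : R}
    (hβ : β ∈ tgaSpan F bar (coordSub n (tgaIdx r j))) :
    ∃ (K : Finset ℤ) (γ : ℤ → R), (∀ k, γ k ∈ tgaSpan F bar (stdSub n r)) ∧
      β = ∑ k ∈ K, γ k * (bar (Pi.single j k) : R) := by
  classical
  refine Submodule.span_induction ?_ ?_ ?_ ?_ hβ
  · rintro _ ⟨a, ha, rfl⟩
    have haA : a - Pi.single j (a j) ∈ stdSub n r := by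
      intro i hi
      by_cases hij : i = j
      · subst hij; simp
      · have hans : i ∉ tgaIdx r j := by
          simp only [tgaIdx, Finset.mem_insert, Finset.mem_filter, Finset.mem_univ, true_and,
            not_or, not_lt]
          exact ⟨hij, hi⟩
        have := ha i hans
        simp [Pi.single_eq_of_ne hij, this]
    refine ⟨{a j}, fun _ => (τ (a - Pi.single j (a j)) (Pi.single j (a j)))⁻¹
        • (bar (a - Pi.single j (a j)) : R),
      fun k => Submodule.smul_mem _ _ (bar_mem_tgaSpan haA), ?_⟩
    rw [Finset.sum_singleton, smul_mul_assoc, h.mul_bar, sub_add_cancel, smul_smul,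
      inv_mul_cancel₀ (h.τ_ne_zero _ _), one_smul]
  · exact ⟨∅, fun _ => 0, fun _ => Submodule.zero_mem _, by simp⟩
  · rintro x y _ _ ⟨K₁, γ₁, m₁, e₁⟩ ⟨K₂, γ₂, m₂, e₂⟩
    refine ⟨K₁ ∪ K₂, fun k => (if k ∈ K₁ then γ₁ k else 0) + (if k ∈ K₂ then γ₂ k else 0),
      fun k => Submodule.add_mem _ (by split_ifs; exacts [m₁ k, Submodule.zero_mem _])
        (by split_ifs; exacts [m₂ k, Submodule.zero_mem _]), ?_⟩
    have e1' : ∑ k ∈ K₁ ∪ K₂, (if k ∈ K₁ then γ₁ k else 0) * (bar (Pi.single j k) : R) = x :=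
      calc ∑ k ∈ K₁ ∪ K₂, (if k ∈ K₁ then γ₁ k else 0) * (bar (Pi.single j k) : R)
          = ∑ k ∈ K₁, (if k ∈ K₁ then γ₁ k else 0) * (bar (Pi.single j k) : R) :=
            (Finset.sum_subset Finset.subset_union_left
              (fun k _ hk => by rw [if_neg hk, zero_mul])).symm
        _ = ∑ k ∈ K₁, γ₁ k * (bar (Pi.single j k) : R) :=
            Finset.sum_congr rfl fun k hk => by rw [if_pos hk]
        _ = x := e₁.symm
    have e2' : ∑ k ∈ K₁ ∪ K₂, (if k ∈ K₂ then γ₂ k else 0) * (bar (Pi.single j k) : R) = y :=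
      calc ∑ k ∈ K₁ ∪ K₂, (if k ∈ K₂ then γ₂ k else 0) * (bar (Pi.single j k) : R)
          = ∑ k ∈ K₂, (if k ∈ K₂ then γ₂ k else 0) * (bar (Pi.single j k) : R) :=
            (Finset.sum_subset Finset.subset_union_right
              (fun k _ hk => by rw [if_neg hk, zero_mul])).symm
        _ = ∑ k ∈ K₂, γ₂ k * (bar (Pi.single j k) : R) :=
            Finset.sum_congr rfl fun k hk => by rw [if_pos hk]
        _ = y := e₂.symm
    rw [← e1', ← e2', ← Finset.sum_add_distrib]
    exact Finset.sum_congr rfl fun k _ => by rw [add_mul]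
  · rintro f x _ ⟨K, γ, m, e⟩
    refine ⟨K, fun k => f • γ k, fun k => Submodule.smul_mem _ _ (m k), ?_⟩
    rw [e, Finset.smul_sum]
    exact Finset.sum_congr rfl fun k _ => by rw [smul_mul_assoc]

lemma rank_le_of_not_torsion {M : Type w} [AddCommGroup M] [Module Rᵐᵒᵖ M] {r : ℕ}
    (hgk : gkTGA F bar M = r) (h0 : 0 < r) {B : AddSubgroup (Fin n → ℤ)}
    (hB : ¬ IsTorsionOverSub F bar B M) : rk B ≤ r := by
  have hmem : rk B ∈ { q : ℕ | ∃ B' : AddSubgroup (Fin n → ℤ),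
      ¬ IsTorsionOverSub F bar B' M ∧ rk B' = q } := ⟨B, hB, rfl⟩
  unfold gkTGA at hgk
  by_cases hbdd : BddAbove { q : ℕ | ∃ B' : AddSubgroup (Fin n → ℤ),
      ¬ IsTorsionOverSub F bar B' M ∧ rk B' = q }
  · have := le_csSup hbdd hmem
    rwa [hgk] at this
  · exfalso
    rw [csSup_of_not_bddAbove hbdd, csSup_empty] at hgk
    simp only [Nat.bot_eq_zero] at hgk
    omega

end TGAAux
section LocAux

variable {F : Type u} [Field F] {n : ℕ} {R : Type v} [Ring R] [Algebra F R]
  {bar : (Fin n → ℤ) → Rˣ} {τ : (Fin n → ℤ) → (Fin n → ℤ) → F}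
  {R' : Type w} [Ring R'] {φ : R →+* R'} {r : ℕ}

lemma unit_conj_conj {u : Rˣ} {s : R} : (u : R) * (↑u⁻¹ * s * ↑u) * ↑u⁻¹ = s := by
  simp [mul_assoc]

lemma unit_conj_conj' {u : Rˣ} {s : R} : (↑u⁻¹ : R) * (↑u * s * ↑u⁻¹) * ↑u = s := by
  simp [mul_assoc]

/-- the core right-Ore computation inside `C = F∗⟨x₁,…,x_r⟩`. -/
lemma ore_core (h : IsTwistedGroupAlgebra F R bar τ)
    (hφ : IsOreLocalizationData (tgaSpan F bar (stdSub n r) : Set R) φ)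
    {c s : R} (hc : c ∈ tgaSpan F bar (stdSub n r)) (hs : s ∈ tgaSpan F bar (stdSub n r))
    (hs0 : s ≠ 0) :
    ∃ u₁ u₂ : R, u₁ ∈ tgaSpan F bar (stdSub n r) ∧ u₂ ∈ tgaSpan F bar (stdSub n r) ∧
      u₂ ≠ 0 ∧ c * u₂ = s * u₁ ∧
      Ring.inverse (φ s) * φ c = φ u₁ * Ring.inverse (φ u₂) := by
  obtain ⟨a, t, ht, ht0, hy⟩ := hφ.surj (Ring.inverse (φ s) * φ c)
  have hsu : IsUnit (φ s) := hφ.isUnit s hs hs0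
  have htu' : IsUnit (φ t) := hφ.isUnit t ht ht0
  have h1 : φ c * φ t = φ s * φ a := by
    calc φ c * φ t = φ s * (Ring.inverse (φ s) * φ c) * φ t := by
          rw [← mul_assoc, Ring.mul_inverse_cancel _ hsu, one_mul]
      _ = φ s * (φ a * Ring.inverse (φ t)) * φ t := by rw [hy]
      _ = φ s * φ a := by
          rw [mul_assoc, mul_assoc, Ring.inverse_mul_cancel _ htu', mul_one]
  have h2 : φ (c * t - s * a) = 0 := by
    rw [map_sub, map_mul, map_mul, h1, sub_self]
  obtain ⟨u, hu, hu0, huz⟩ := (hφ.ker _).1 h2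
  have h3 : c * (t * u) = s * (a * u) := by
    have h4 : c * t * u - s * a * u = 0 := by
      rw [← sub_mul]; exact huz
    have h5 : c * t * u = s * a * u := by
      rw [← sub_eq_zero]; exact h4
    rw [← mul_assoc, ← mul_assoc, h5]
  have htuC : t * u ∈ tgaSpan F bar (stdSub n r) := mul_mem_tgaSpan h ht hu
  have htu0 : t * u ≠ 0 := tga_mul_ne_zero h ht0 hu0
  have hauC : a * u ∈ tgaSpan F bar (stdSub n r) :=
    tga_left_cancel h hs hs0 (by rw [← h3]; exact mul_mem_tgaSpan h hc htuC)
  refine ⟨a * u, t * u, hauC, htuC, htu0, h3, ?_⟩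
  have h4 : φ c * φ (t * u) = φ s * φ (a * u) := by
    rw [← map_mul, ← map_mul, h3]
  have h5 : φ c = φ s * φ (a * u) * Ring.inverse (φ (t * u)) := by
    calc φ c = φ c * φ (t * u) * Ring.inverse (φ (t * u)) := by
          rw [mul_assoc, Ring.mul_inverse_cancel _ (hφ.isUnit _ htuC htu0), mul_one]
      _ = φ s * φ (a * u) * Ring.inverse (φ (t * u)) := by rw [h4]
  rw [h5, ← mul_assoc, ← mul_assoc, Ring.inverse_mul_cancel _ hsu, one_mul]

/-- `0` is in the quotient division set. -/
lemma d_zero (h : IsTwistedGroupAlgebra F R bar τ)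
    (hφ : IsOreLocalizationData (tgaSpan F bar (stdSub n r) : Set R) φ) :
    (0 : R') ∈ quotDivisionRing (tgaSpan F bar (stdSub n r) : Set R) φ :=
  ⟨0, Submodule.zero_mem _, 1, one_mem_tgaSpan h _, tga_nontrivial h,
    by rw [map_zero, zero_mul]⟩

lemma d_one (h : IsTwistedGroupAlgebra F R bar τ)
    (hφ : IsOreLocalizationData (tgaSpan F bar (stdSub n r) : Set R) φ) :
    (1 : R') ∈ quotDivisionRing (tgaSpan F bar (stdSub n r) : Set R) φ :=
  ⟨1, one_mem_tgaSpan h _, 1, one_mem_tgaSpan h _, tga_nontrivial h,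
    by rw [map_one, Ring.inverse_one, one_mul]⟩

lemma d_phi (h : IsTwistedGroupAlgebra F R bar τ)
    (hφ : IsOreLocalizationData (tgaSpan F bar (stdSub n r) : Set R) φ)
    {c : R} (hc : c ∈ tgaSpan F bar (stdSub n r)) :
    φ c ∈ quotDivisionRing (tgaSpan F bar (stdSub n r) : Set R) φ :=
  ⟨c, hc, 1, one_mem_tgaSpan h _, tga_nontrivial h,
    by rw [map_one, Ring.inverse_one, mul_one]⟩

lemma d_inv_phi (h : IsTwistedGroupAlgebra F R bar τ)
    (hφ : IsOreLocalizationData (tgaSpan F bar (stdSub n r) : Set R) φ)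
    {s : R} (hs : s ∈ tgaSpan F bar (stdSub n r)) (hs0 : s ≠ 0) :
    Ring.inverse (φ s) ∈ quotDivisionRing (tgaSpan F bar (stdSub n r) : Set R) φ :=
  ⟨1, one_mem_tgaSpan h _, s, hs, hs0, by rw [map_one, one_mul]⟩

lemma d_neg (h : IsTwistedGroupAlgebra F R bar τ)
    (hφ : IsOreLocalizationData (tgaSpan F bar (stdSub n r) : Set R) φ)
    {d : R'} (hd : d ∈ quotDivisionRing (tgaSpan F bar (stdSub n r) : Set R) φ) :
    -d ∈ quotDivisionRing (tgaSpan F bar (stdSub n r) : Set R) φ := by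
  obtain ⟨c, hc, s, hs, hs0, rfl⟩ := hd
  exact ⟨-c, Submodule.neg_mem _ hc, s, hs, hs0, by rw [map_neg, neg_mul]⟩

lemma d_add (h : IsTwistedGroupAlgebra F R bar τ)
    (hφ : IsOreLocalizationData (tgaSpan F bar (stdSub n r) : Set R) φ)
    {d₁ d₂ : R'} (hd₁ : d₁ ∈ quotDivisionRing (tgaSpan F bar (stdSub n r) : Set R) φ)
    (hd₂ : d₂ ∈ quotDivisionRing (tgaSpan F bar (stdSub n r) : Set R) φ) :
    d₁ + d₂ ∈ quotDivisionRing (tgaSpan F bar (stdSub n r) : Set R) φ := by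
  obtain ⟨c₁, hc₁, s₁, hs₁, hs₁0, rfl⟩ := hd₁
  obtain ⟨c₂, hc₂, s₂, hs₂, hs₂0, rfl⟩ := hd₂
  obtain ⟨u₁, u₂, hu₁, hu₂, hu₂0, hcu, -⟩ := ore_core h hφ hs₂ hs₁ hs₁0
  -- s₂ * u₂ = s₁ * u₁
  have hw : s₁ * u₁ ≠ 0 := by rw [← hcu]; exact tga_mul_ne_zero h hs₂0 hu₂0
  have hwC : s₁ * u₁ ∈ tgaSpan F bar (stdSub n r) := mul_mem_tgaSpan h hs₁ hu₁
  have hu₁0 : u₁ ≠ 0 := fun h0 => hw (by rw [h0, mul_zero])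
  have key : ∀ (c s uu : R), s ∈ tgaSpan F bar (stdSub n r) → s ≠ 0 →
      s * uu ∈ tgaSpan F bar (stdSub n r) → s * uu ≠ 0 →
      φ c * Ring.inverse (φ s) = φ (c * uu) * Ring.inverse (φ (s * uu)) := by
    intro c s uu hsC hs0' hsuC hsu0
    have huu : IsUnit (φ (s * uu)) := hφ.isUnit _ hsuC hsu0
    have hsu : IsUnit (φ s) := hφ.isUnit _ hsC hs0'
    have h1 : φ c * Ring.inverse (φ s) * φ (s * uu) = φ (c * uu) := by
      rw [map_mul (φ) s uu, ← mul_assoc, mul_assoc (φ c),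
        Ring.inverse_mul_cancel _ hsu, mul_one, ← map_mul]
    calc φ c * Ring.inverse (φ s)
        = φ c * Ring.inverse (φ s) * φ (s * uu) * Ring.inverse (φ (s * uu)) := by
          rw [mul_assoc, Ring.mul_inverse_cancel _ huu, mul_one]
      _ = φ (c * uu) * Ring.inverse (φ (s * uu)) := by rw [h1]
  have e₁ : φ c₁ * Ring.inverse (φ s₁) = φ (c₁ * u₁) * Ring.inverse (φ (s₁ * u₁)) :=
    key c₁ s₁ u₁ hs₁ hs₁0 hwC hw
  have e₂ : φ c₂ * Ring.inverse (φ s₂) = φ (c₂ * u₂) * Ring.inverse (φ (s₁ * u₁)) := by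
    have := key c₂ s₂ u₂ hs₂ hs₂0 (by rw [hcu]; exact hwC) (by rw [hcu]; exact hw)
    rwa [hcu] at this
  rw [e₁, e₂, ← add_mul, ← map_add]
  exact ⟨c₁ * u₁ + c₂ * u₂, Submodule.add_mem _ (mul_mem_tgaSpan h hc₁ hu₁)
    (mul_mem_tgaSpan h hc₂ hu₂), s₁ * u₁, hwC, hw, rfl⟩

lemma d_mul (h : IsTwistedGroupAlgebra F R bar τ)
    (hφ : IsOreLocalizationData (tgaSpan F bar (stdSub n r) : Set R) φ)
    {d₁ d₂ : R'} (hd₁ : d₁ ∈ quotDivisionRing (tgaSpan F bar (stdSub n r) : Set R) φ)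
    (hd₂ : d₂ ∈ quotDivisionRing (tgaSpan F bar (stdSub n r) : Set R) φ) :
    d₁ * d₂ ∈ quotDivisionRing (tgaSpan F bar (stdSub n r) : Set R) φ := by
  obtain ⟨c₁, hc₁, s₁, hs₁, hs₁0, rfl⟩ := hd₁
  obtain ⟨c₂, hc₂, s₂, hs₂, hs₂0, rfl⟩ := hd₂
  obtain ⟨u₁, u₂, hu₁, hu₂, hu₂0, hcu, hswap⟩ := ore_core h hφ hc₂ hs₁ hs₁0
  -- inv φ s₁ * φ c₂ = φ u₁ * inv φ u₂
  have h1 : φ c₁ * Ring.inverse (φ s₁) * (φ c₂ * Ring.inverse (φ s₂))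
      = φ (c₁ * u₁) * (Ring.inverse (φ u₂) * Ring.inverse (φ s₂)) := by
    rw [mul_assoc (φ c₁), ← mul_assoc (Ring.inverse (φ s₁)), hswap, map_mul]
    simp [mul_assoc]
  have h2 : Ring.inverse (φ u₂) * Ring.inverse (φ s₂) = Ring.inverse (φ (s₂ * u₂)) := by
    have hA : IsUnit (φ s₂) := hφ.isUnit _ hs₂ hs₂0
    have hB : IsUnit (φ u₂) := hφ.isUnit _ hu₂ hu₂0
    have hAB : IsUnit (φ (s₂ * u₂)) :=
      hφ.isUnit _ (mul_mem_tgaSpan h hs₂ hu₂) (tga_mul_ne_zero h hs₂0 hu₂0)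
    have : (Ring.inverse (φ u₂) * Ring.inverse (φ s₂)) * φ (s₂ * u₂) = 1 := by
      rw [map_mul, ← mul_assoc, mul_assoc (Ring.inverse (φ u₂)),
        Ring.inverse_mul_cancel _ hA, mul_one, Ring.inverse_mul_cancel _ hB]
    calc Ring.inverse (φ u₂) * Ring.inverse (φ s₂)
        = (Ring.inverse (φ u₂) * Ring.inverse (φ s₂)) * φ (s₂ * u₂)
            * Ring.inverse (φ (s₂ * u₂)) := by
          rw [mul_assoc, Ring.mul_inverse_cancel _ hAB, mul_one]
      _ = Ring.inverse (φ (s₂ * u₂)) := by rw [this, one_mul]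
  rw [h1, h2]
  exact ⟨c₁ * u₁, mul_mem_tgaSpan h hc₁ hu₁, s₂ * u₂, mul_mem_tgaSpan h hs₂ hu₂,
    tga_mul_ne_zero h hs₂0 hu₂0, rfl⟩

lemma d_inv (h : IsTwistedGroupAlgebra F R bar τ)
    (hφ : IsOreLocalizationData (tgaSpan F bar (stdSub n r) : Set R) φ)
    {d : R'} (hd : d ∈ quotDivisionRing (tgaSpan F bar (stdSub n r) : Set R) φ)
    (hd0 : d ≠ 0) :
    ∃ d' ∈ quotDivisionRing (tgaSpan F bar (stdSub n r) : Set R) φ,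
      d * d' = 1 ∧ d' * d = 1 := by
  obtain ⟨c, hc, s, hs, hs0, rfl⟩ := hd
  have hc0 : c ≠ 0 := by
    intro h0
    exact hd0 (by rw [h0, map_zero, zero_mul])
  have hcu : IsUnit (φ c) := hφ.isUnit _ hc hc0
  have hsu : IsUnit (φ s) := hφ.isUnit _ hs hs0
  refine ⟨φ s * Ring.inverse (φ c), ⟨s, hs, c, hc, hc0, rfl⟩, ?_, ?_⟩
  · rw [mul_assoc, ← mul_assoc (Ring.inverse (φ s)), Ring.inverse_mul_cancel _ hsu,
      one_mul, Ring.mul_inverse_cancel _ hcu]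
  · rw [mul_assoc, ← mul_assoc (Ring.inverse (φ c)), Ring.inverse_mul_cancel _ hcu,
      one_mul, Ring.mul_inverse_cancel _ hsu]

/-- commuting a monomial unit past an inverse. -/
lemma phi_bar_inv_comm (h : IsTwistedGroupAlgebra F R bar τ)
    (hφ : IsOreLocalizationData (tgaSpan F bar (stdSub n r) : Set R) φ)
    {s : R} (hs : s ∈ tgaSpan F bar (stdSub n r)) (hs0 : s ≠ 0) (t : Fin n → ℤ) :
    φ ((bar t : R)) * Ring.inverse (φ s)
      = Ring.inverse (φ ((bar t : R) * s * ↑(bar t)⁻¹)) * φ ((bar t : R)) := by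
  set s' := (bar t : R) * s * ↑(bar t)⁻¹ with hs'def
  have hs'C : s' ∈ tgaSpan F bar (stdSub n r) := conj_mem_tgaSpan h t hs
  have hs'0 : s' ≠ 0 := conj_unit_ne_zero hs0
  have hkey : s' * (bar t : R) = (bar t : R) * s := by
    rw [hs'def, mul_assoc, Units.inv_mul, mul_one]
  have hkey' : φ s' * φ ((bar t : R)) = φ ((bar t : R)) * φ s := by
    rw [← map_mul, ← map_mul, hkey]
  have hinner : φ s' * (φ ((bar t : R)) * Ring.inverse (φ s)) = φ ((bar t : R)) := by
    rw [← mul_assoc, hkey', mul_assoc, Ring.mul_inverse_cancel _ (hφ.isUnit _ hs hs0),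
      mul_one]
  calc φ ((bar t : R)) * Ring.inverse (φ s)
      = Ring.inverse (φ s') * (φ s' * (φ ((bar t : R)) * Ring.inverse (φ s))) := by
        rw [Ring.inverse_mul_cancel_left _ _ (hφ.isUnit _ hs'C hs'0)]
    _ = Ring.inverse (φ s') * φ ((bar t : R)) := by rw [hinner]

/-- pushing an element of `D` to the other side of a monomial unit. -/
lemma d_push (h : IsTwistedGroupAlgebra F R bar τ)
    (hφ : IsOreLocalizationData (tgaSpan F bar (stdSub n r) : Set R) φ)
    {d : R'} (hd : d ∈ quotDivisionRing (tgaSpan F bar (stdSub n r) : Set R) φ)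
    (t : Fin n → ℤ) :
    ∃ d' ∈ quotDivisionRing (tgaSpan F bar (stdSub n r) : Set R) φ,
      d * φ ((bar t : R)) = φ ((bar t : R)) * d' := by
  obtain ⟨c, hc, s, hs, hs0, rfl⟩ := hd
  set c'' := (↑(bar t)⁻¹ : R) * c * (bar t : R) with hc''def
  set s'' := (↑(bar t)⁻¹ : R) * s * (bar t : R) with hs''def
  have hc''C : c'' ∈ tgaSpan F bar (stdSub n r) := conj'_mem_tgaSpan h t hc
  have hs''C : s'' ∈ tgaSpan F bar (stdSub n r) := conj'_mem_tgaSpan h t hs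
  have hs''0 : s'' ≠ 0 := by
    have : s'' = (↑((bar t)⁻¹) : R) * s * ↑((bar t)⁻¹)⁻¹ := by
      rw [hs''def, inv_inv]
    rw [this]
    exact conj_unit_ne_zero hs0
  refine ⟨φ c'' * Ring.inverse (φ s''), ⟨c'', hc''C, s'', hs''C, hs''0, rfl⟩, ?_⟩
  have hkc : φ ((bar t : R)) * φ c'' = φ c * φ ((bar t : R)) := by
    rw [← map_mul, ← map_mul, hc''def, ← mul_assoc, Units.mul_inv_cancel_left]
  have hks : (bar t : R) * s'' * ↑(bar t)⁻¹ = s := by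
    rw [hs''def]; exact unit_conj_conj
  have hinv : Ring.inverse (φ s) * φ ((bar t : R)) = φ ((bar t : R)) * Ring.inverse (φ s'') := by
    have := phi_bar_inv_comm h hφ hs''C hs''0 t
    rw [hks] at this
    exact this.symm
  calc φ c * Ring.inverse (φ s) * φ ((bar t : R))
      = φ c * (Ring.inverse (φ s) * φ ((bar t : R))) := by rw [mul_assoc]
    _ = φ c * (φ ((bar t : R)) * Ring.inverse (φ s'')) := by rw [hinv]
    _ = (φ c * φ ((bar t : R))) * Ring.inverse (φ s'') := by rw [mul_assoc]
    _ = (φ ((bar t : R)) * φ c'') * Ring.inverse (φ s'') := by rw [hkc]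
    _ = φ ((bar t : R)) * (φ c'' * Ring.inverse (φ s'')) := by rw [mul_assoc]

end LocAux
section DSpanAux

variable {R' : Type w} [Ring R'] {M' : Type x} [AddCommGroup M'] [Module R'ᵐᵒᵖ M']

/-- The set of right `D`-linear combinations of a finite set `G ⊆ M'`. -/
def DSpan (Dset : Set R') (G : Finset M') : Set M' :=
  { x | ∃ c : M' → R', (∀ g ∈ G, c g ∈ Dset) ∧ x = ∑ g ∈ G, op (c g) • g }

variable {Dset : Set R'} {G G' : Finset M'}

lemma dspan_zero (h0 : (0 : R') ∈ Dset) : (0 : M') ∈ DSpan Dset G :=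
  ⟨fun _ => 0, fun _ _ => h0, by simp⟩

lemma dspan_gen (h0 : (0 : R') ∈ Dset) (h1 : (1 : R') ∈ Dset) {g₀ : M'} (hg : g₀ ∈ G) :
    g₀ ∈ DSpan Dset G := by
  classical
  refine ⟨fun g => if g = g₀ then 1 else 0, fun g _ => by dsimp only; split_ifs <;> assumption, ?_⟩
  have : ∀ g ∈ G, op (if g = g₀ then (1 : R') else 0) • g
      = if g = g₀ then g else 0 := by
    intro g _
    split_ifs <;> simp
  rw [Finset.sum_congr rfl this, Finset.sum_ite_eq' G g₀ (fun g => g), if_pos hg]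

lemma dspan_add (hadd : ∀ a ∈ Dset, ∀ b ∈ Dset, a + b ∈ Dset)
    {x y : M'} (hx : x ∈ DSpan Dset G) (hy : y ∈ DSpan Dset G) :
    x + y ∈ DSpan Dset G := by
  obtain ⟨c₁, hc₁, rfl⟩ := hx
  obtain ⟨c₂, hc₂, rfl⟩ := hy
  refine ⟨fun g => c₁ g + c₂ g, fun g hg => hadd _ (hc₁ g hg) _ (hc₂ g hg), ?_⟩
  rw [← Finset.sum_add_distrib]
  refine Finset.sum_congr rfl fun g _ => ?_
  rw [op_add, add_smul]

lemma dspan_smul (hmul : ∀ a ∈ Dset, ∀ b ∈ Dset, a * b ∈ Dset)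
    {x : M'} (hx : x ∈ DSpan Dset G) {d : R'} (hd : d ∈ Dset) :
    op d • x ∈ DSpan Dset G := by
  obtain ⟨c, hc, rfl⟩ := hx
  refine ⟨fun g => c g * d, fun g hg => hmul _ (hc g hg) _ hd, ?_⟩
  rw [Finset.smul_sum]
  refine Finset.sum_congr rfl fun g _ => ?_
  rw [← mul_smul, ← op_mul]

lemma dspan_mono (h0 : (0 : R') ∈ Dset) (hGG : G ⊆ G') :
    DSpan Dset G ⊆ DSpan (M' := M') Dset G' := by
  rintro x ⟨c, hc, rfl⟩
  classical
  refine ⟨fun g => if g ∈ G then c g else 0,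
    fun g _ => by dsimp only; split_ifs with hg; exacts [hc g hg, h0], ?_⟩
  rw [← Finset.sum_subset hGG (fun g _ hg => by dsimp only; rw [if_neg hg, op_zero, zero_smul])]
  exact Finset.sum_congr rfl fun g hg => by dsimp only; rw [if_pos hg]

lemma dspan_sum (h0 : (0 : R') ∈ Dset) (hadd : ∀ a ∈ Dset, ∀ b ∈ Dset, a + b ∈ Dset)
    {ι : Type*} (s : Finset ι) (f : ι → M') (hf : ∀ i ∈ s, f i ∈ DSpan Dset G) :
    ∑ i ∈ s, f i ∈ DSpan Dset G := by
  classical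
  revert hf
  refine Finset.induction_on s ?_ ?_
  · intro _; simpa using dspan_zero h0
  · intro a s' has ih hf
    rw [Finset.sum_insert has]
    exact dspan_add hadd (hf _ (Finset.mem_insert_self _ _))
      (ih fun i hi => hf _ (Finset.mem_insert_of_mem hi))

lemma dspan_neg (h0 : (0 : R') ∈ Dset) (hneg : ∀ a ∈ Dset, -a ∈ Dset)
    (h1 : (1 : R') ∈ Dset) (hmul : ∀ a ∈ Dset, ∀ b ∈ Dset, a * b ∈ Dset)
    {x : M'} (hx : x ∈ DSpan Dset G) : -x ∈ DSpan Dset G := by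
  have : -x = op (-1 : R') • x := by
    rw [op_neg, op_one, neg_smul, one_smul]
  rw [this]
  exact dspan_smul hmul hx (hneg _ h1)

lemma dspan_translate (hmul : ∀ a ∈ Dset, ∀ b ∈ Dset, a * b ∈ Dset)
    (h0 : (0 : R') ∈ Dset) (hadd : ∀ a ∈ Dset, ∀ b ∈ Dset, a + b ∈ Dset)
    {u : R'} (hpush : ∀ d ∈ Dset, ∃ d' ∈ Dset, d * u = u * d')
    (hgen : ∀ g ∈ G, op u • g ∈ DSpan Dset G')
    {x : M'} (hx : x ∈ DSpan Dset G) : op u • x ∈ DSpan Dset G' := by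
  obtain ⟨c, hc, rfl⟩ := hx
  rw [Finset.smul_sum]
  refine dspan_sum h0 hadd _ _ fun g hg => ?_
  obtain ⟨d', hd', hdu⟩ := hpush _ (hc g hg)
  have : op u • (op (c g) • g) = op d' • (op u • g) := by
    rw [← mul_smul, ← mul_smul, ← op_mul, ← op_mul, hdu]
  rw [this]
  exact dspan_smul hmul (hgen g hg) hd'

end DSpanAux
section ReduceAux

variable {F : Type u} [Field F] {n : ℕ} {R : Type v} [Ring R] [Algebra F R]
  {bar : (Fin n → ℤ) → Rˣ} {τ : (Fin n → ℤ) → (Fin n → ℤ) → F}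
  {R' : Type w} [Ring R'] {φ : R →+* R'} {r : ℕ}
  {M' : Type x} [AddCommGroup M'] [Module R'ᵐᵒᵖ M'] [DecidableEq M']

lemma field_smul_ne_zero {f : F} (hf : f ≠ 0) {x : R} (hx : x ≠ 0) : f • x ≠ 0 := by
  intro h0
  apply hx
  have : x = f⁻¹ • (f • x) := by rw [smul_smul, inv_mul_cancel₀ hf, one_smul]
  rw [this, h0, smul_zero]

lemma conj'_ne_zero {g : R} (hg : g ≠ 0) (t : Fin n → ℤ) :
    (↑(bar t)⁻¹ : R) * g * (bar t : R) ≠ 0 := by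
  have heq : (↑(bar t)⁻¹ : R) * g * (bar t : R)
      = (↑((bar t)⁻¹) : R) * g * ↑((bar t)⁻¹)⁻¹ := by rw [inv_inv]
  rw [heq]
  exact conj_unit_ne_zero hg

lemma op_term_eq (φ : R →+* R') (g : R) (t : Fin n → ℤ) (v : M') :
    op (φ (g * (bar t : R))) • v
      = op (φ ((↑(bar t)⁻¹ : R) * g * (bar t : R))) • (op (φ ((bar t : R))) • v) := by
  have hid : g * (bar t : R) = (bar t : R) * ((↑(bar t)⁻¹ : R) * g * (bar t : R)) := by
    rw [← mul_assoc, Units.mul_inv_cancel_left]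
  rw [hid, map_mul, op_mul, mul_smul]

/-- The key one-variable reduction: a torsion relation in direction `j` confines all
monomial translates of `v` to a fixed finite window, over `D`. -/
lemma tga_reduce (h : IsTwistedGroupAlgebra F R bar τ)
    (hφ : IsOreLocalizationData (tgaSpan F bar (stdSub n r) : Set R) φ)
    (v : M') (j : Fin n) (K : Finset ℤ) (hK : K.Nonempty) (γ : ℤ → R)
    (hγC : ∀ k ∈ K, γ k ∈ tgaSpan F bar (stdSub n r))
    (hγ0 : ∀ k ∈ K, γ k ≠ 0)
    (hrel : ∑ k ∈ K, op (φ (γ k * (bar (Pi.single j k) : R))) • v = 0)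
    (m : ℤ) :
    op (φ ((bar (Pi.single j m) : R))) • v ∈
      DSpan (quotDivisionRing (tgaSpan F bar (stdSub n r) : Set R) φ)
        ((Finset.Ico (K.min' hK) (K.max' hK)).image
          (fun l => op (φ ((bar (Pi.single j l) : R))) • v)) := by
  classical
  set Dset := quotDivisionRing (tgaSpan F bar (stdSub n r) : Set R) φ with hDset
  set W := (Finset.Ico (K.min' hK) (K.max' hK)).image
    (fun l => op (φ ((bar (Pi.single j l) : R))) • v) with hWdef
  have h0D : (0 : R') ∈ Dset := d_zero h hφ
  have h1D : (1 : R') ∈ Dset := d_one h hφ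
  have haddD : ∀ a ∈ Dset, ∀ b ∈ Dset, a + b ∈ Dset := fun a ha b hb => d_add h hφ ha hb
  have hmulD : ∀ a ∈ Dset, ∀ b ∈ Dset, a * b ∈ Dset := fun a ha b hb => d_mul h hφ ha hb
  have hnegD : ∀ a ∈ Dset, -a ∈ Dset := fun a ha => d_neg h hφ ha
  set P : ℤ → Prop := fun mm =>
    op (φ ((bar (Pi.single j mm) : R))) • v ∈ DSpan Dset W with hPdef
  -- shifted relations
  have hterm : ∀ (k s : ℤ), γ k * (bar (Pi.single j k) : R) * (bar (Pi.single j s) : R)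
      = (τ (Pi.single j k) (Pi.single j s) • γ k) * (bar (Pi.single j (k + s)) : R) := by
    intro k s
    rw [mul_assoc, h.mul_bar, ← Pi.single_add, mul_smul_comm, smul_mul_assoc]
  have hrel_s : ∀ s : ℤ, ∑ k ∈ K,
      op (φ ((τ (Pi.single j k) (Pi.single j s) • γ k)
        * (bar (Pi.single j (k + s)) : R))) • v = 0 := by
    intro s
    have h1 := congrArg (fun z : M' => op (φ ((bar (Pi.single j s) : R))) • z) hrel
    simp only [smul_zero] at h1
    rw [Finset.smul_sum] at h1
    have h2 : ∀ k ∈ K, op (φ ((bar (Pi.single j s) : R)))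
        • (op (φ (γ k * (bar (Pi.single j k) : R))) • v)
        = op (φ ((τ (Pi.single j k) (Pi.single j s) • γ k)
            * (bar (Pi.single j (k + s)) : R))) • v := by
      intro k _
      rw [← mul_smul, ← op_mul, ← map_mul, ← hterm k s]
    rw [Finset.sum_congr rfl h2] at h1
    exact h1
  -- conjugated coefficients
  set cj : ℤ → ℤ → R := fun k s => (↑(bar (Pi.single j (k + s)))⁻¹ : R)
      * (τ (Pi.single j k) (Pi.single j s) • γ k) * (bar (Pi.single j (k + s)) : R)
    with hcjdef
  have hcjC : ∀ k ∈ K, ∀ s : ℤ, cj k s ∈ tgaSpan F bar (stdSub n r) := fun k hk s =>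
    conj'_mem_tgaSpan h _ (Submodule.smul_mem _ _ (hγC k hk))
  have hcj0 : ∀ k ∈ K, ∀ s : ℤ, cj k s ≠ 0 := fun k hk s =>
    conj'_ne_zero (field_smul_ne_zero (h.τ_ne_zero _ _) (hγ0 k hk)) _
  have hterm2 : ∀ (k s : ℤ),
      op (φ ((τ (Pi.single j k) (Pi.single j s) • γ k)
        * (bar (Pi.single j (k + s)) : R))) • v
      = op (φ (cj k s)) • (op (φ ((bar (Pi.single j (k + s)) : R))) • v) :=
    fun k s => op_term_eq φ _ _ v
  -- isolation of one index
  have hiso : ∀ k0 ∈ K, ∀ s : ℤ,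
      op (φ (cj k0 s)) • (op (φ ((bar (Pi.single j (k0 + s)) : R))) • v)
        = - ∑ k ∈ K.erase k0,
            op (φ (cj k s)) • (op (φ ((bar (Pi.single j (k + s)) : R))) • v) := by
    intro k0 hk0 s
    have h2 : ∑ k ∈ K, op (φ (cj k s))
        • (op (φ ((bar (Pi.single j (k + s)) : R))) • v) = 0 := by
      calc ∑ k ∈ K, op (φ (cj k s)) • (op (φ ((bar (Pi.single j (k + s)) : R))) • v)
          = ∑ k ∈ K, op (φ ((τ (Pi.single j k) (Pi.single j s) • γ k)
              * (bar (Pi.single j (k + s)) : R))) • v :=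
            Finset.sum_congr rfl fun k _ => (hterm2 k s).symm
        _ = 0 := hrel_s s
    have h3 := Finset.add_sum_erase K (fun k => op (φ (cj k s))
      • (op (φ ((bar (Pi.single j (k + s)) : R))) • v)) hk0
    rw [h2] at h3
    exact eq_neg_of_add_eq_zero_left h3
  -- the "solve for the isolated index" step
  have hsolve : ∀ k0 ∈ K, ∀ s : ℤ,
      (∀ k ∈ K.erase k0, P (k + s)) → P (k0 + s) := by
    intro k0 hk0 s hIH
    have hRHS : ∑ k ∈ K.erase k0,
        op (φ (cj k s)) • (op (φ ((bar (Pi.single j (k + s)) : R))) • v) ∈ DSpan Dset W := by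
      refine dspan_sum h0D haddD _ _ fun k hk => ?_
      exact dspan_smul hmulD (hIH k hk) (d_phi h hφ (hcjC k (Finset.mem_of_mem_erase hk) s))
    have hX : op (φ (cj k0 s)) • (op (φ ((bar (Pi.single j (k0 + s)) : R))) • v)
        ∈ DSpan Dset W := by
      rw [hiso k0 hk0 s]
      exact dspan_neg h0D hnegD h1D hmulD hRHS
    have hcjC' := hcjC k0 hk0 s
    have hcj0' := hcj0 k0 hk0 s
    have hfin : op (Ring.inverse (φ (cj k0 s)))
        • (op (φ (cj k0 s)) • (op (φ ((bar (Pi.single j (k0 + s)) : R))) • v))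
        = op (φ ((bar (Pi.single j (k0 + s)) : R))) • v := by
      rw [← mul_smul, ← op_mul, Ring.mul_inverse_cancel _ (hφ.isUnit _ hcjC' hcj0'),
        op_one, one_smul]
    have := dspan_smul hmulD hX (d_inv_phi h hφ hcjC' hcj0')
    rwa [hfin] at this
  -- upward induction
  have hup : ∀ N : ℕ, P (K.min' hK + N) := by
    intro N
    induction N using Nat.strong_induction_on with
    | _ N IH =>
      by_cases hcase : (K.min' hK + (N : ℤ)) < K.max' hK
      · exact dspan_gen h0D h1D (Finset.mem_image_of_mem _
          (Finset.mem_Ico.2 ⟨by omega, hcase⟩))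
      · have hsolve' := hsolve (K.max' hK) (K.max'_mem hK)
          (K.min' hK + (N : ℤ) - K.max' hK)
        have heq : K.max' hK + (K.min' hK + (N : ℤ) - K.max' hK) = K.min' hK + N := by omega
        rw [heq] at hsolve'
        refine hsolve' fun k hk => ?_
        have hkK : k ∈ K := Finset.mem_of_mem_erase hk
        have hkne : k ≠ K.max' hK := Finset.ne_of_mem_erase hk
        have hklt : k < K.max' hK := lt_of_le_of_ne (Finset.le_max' K k hkK) hkne
        have hkge : K.min' hK ≤ k := Finset.min'_le K k hkK
        set w : ℤ := k + (K.min' hK + (N : ℤ) - K.max' hK) with hwdef2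
        have hN' : (w - K.min' hK).toNat < N := by omega
        have heq2 : K.min' hK + (((w - K.min' hK).toNat : ℕ) : ℤ) = w := by omega
        have hPw := IH _ hN'
        rwa [heq2] at hPw
  -- downward induction
  have hdown : ∀ N : ℕ, P (K.min' hK - N) := by
    intro N
    induction N using Nat.strong_induction_on with
    | _ N IH =>
      by_cases hN0 : (N : ℤ) = 0
      · have heq : K.min' hK - (N : ℤ) = K.min' hK + ((0 : ℕ) : ℤ) := by omega
        rw [heq]
        exact hup 0
      · have hsolve' := hsolve (K.min' hK) (K.min'_mem hK) (-(N : ℤ))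
        have heq : K.min' hK + (-(N : ℤ)) = K.min' hK - N := by omega
        rw [heq] at hsolve'
        refine hsolve' fun k hk => ?_
        have hkK : k ∈ K := Finset.mem_of_mem_erase hk
        have hkne : k ≠ K.min' hK := Finset.ne_of_mem_erase hk
        have hkgt : K.min' hK < k := lt_of_le_of_ne (Finset.min'_le K k hkK) (Ne.symm hkne)
        rcases le_or_gt (K.min' hK) (k - (N : ℤ)) with hge | hlt
        · have heq2 : K.min' hK + (((k - N - K.min' hK).toNat : ℕ) : ℤ) = k + (-(N : ℤ)) := by
            omega
          have hPw := hup (k - N - K.min' hK).toNat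
          rwa [heq2] at hPw
        · have hN' : (K.min' hK - (k - N)).toNat < N := by omega
          have heq2 : K.min' hK - (((K.min' hK - (k - N)).toNat : ℕ) : ℤ) = k + (-(N : ℤ)) := by
            omega
          have hPw := IH _ hN'
          rwa [heq2] at hPw
  rcases le_or_gt (K.min' hK) m with hge | hlt
  · have heq : K.min' hK + (((m - K.min' hK).toNat : ℕ) : ℤ) = m := by omega
    have hfin2 := hup (m - K.min' hK).toNat
    rw [heq] at hfin2
    exact hfin2
  · have heq : K.min' hK - (((K.min' hK - m).toNat : ℕ) : ℤ) = m := by omega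
    have hfin2 := hdown (K.min' hK - m).toNat
    rw [heq] at hfin2
    exact hfin2

end ReduceAux
section MainAux

variable {F : Type u} [Field F] {n : ℕ} {R : Type v} [Ring R] [Algebra F R]
  {bar : (Fin n → ℤ) → Rˣ} {τ : (Fin n → ℤ) → (Fin n → ℤ) → F}
  {R' : Type w} [Ring R'] {φ : R →+* R'} {r : ℕ}
  {M : Type v} [AddCommGroup M] [Module Rᵐᵒᵖ M]
  {M' : Type w} [AddCommGroup M'] [Module R'ᵐᵒᵖ M'] [DecidableEq M']
  {ψ : M →+ M'}

lemma torsion_transfer (h : IsTwistedGroupAlgebra F R bar τ)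
    (hφ : IsOreLocalizationData (tgaSpan F bar (stdSub n r) : Set R) φ)
    (hψ : IsOreModuleLocalizationData (tgaSpan F bar (stdSub n r) : Set R) φ ψ)
    {B : AddSubgroup (Fin n → ℤ)} (hBle : stdSub n r ≤ B)
    (hT : IsTorsionOverSub F bar B M) (v : M') :
    ∃ β ∈ tgaSpan F bar B, β ≠ 0 ∧ op (φ β) • v = 0 := by
  obtain ⟨m, s, hs, hs0, rfl⟩ := hψ.surj v
  obtain ⟨β, hβ, hβ0, hβm⟩ := hT m
  refine ⟨s * β, mul_mem_tgaSpan h (tgaSpan_mono hBle hs) hβ,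
    tga_mul_ne_zero h hs0 hβ0, ?_⟩
  rw [← mul_smul, ← op_mul]
  have hkey : Ring.inverse (φ s) * φ (s * β) = φ β := by
    rw [map_mul, Ring.inverse_mul_cancel_left _ _ (hφ.isUnit s hs hs0)]
  rw [hkey, ← hψ.semilinear, hβm, map_zero]

/-- The main induction on the number of "free" directions. -/
lemma tga_main (h : IsTwistedGroupAlgebra F R bar τ)
    (hφ : IsOreLocalizationData (tgaSpan F bar (stdSub n r) : Set R) φ)
    (hψ : IsOreModuleLocalizationData (tgaSpan F bar (stdSub n r) : Set R) φ ψ)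
    (hTor : ∀ j : Fin n, r ≤ (j : ℕ) →
      IsTorsionOverSub F bar (coordSub n (tgaIdx r j)) M) :
    ∀ (d jj : ℕ), r ≤ jj → jj + d = n → ∀ v : M', ∃ G : Finset M',
      ∀ t : Fin n → ℤ, (∀ i : Fin n, (i : ℕ) < jj → t i = 0) →
        op (φ ((bar t : R))) • v ∈
          DSpan (quotDivisionRing (tgaSpan F bar (stdSub n r) : Set R) φ) G := by
  have h0D := d_zero h hφ
  have h1D := d_one h hφ
  have haddD : ∀ a ∈ _, ∀ b ∈ _, _ := fun a ha b hb => d_add h hφ ha hb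
  have hmulD : ∀ a ∈ _, ∀ b ∈ _, _ := fun a ha b hb => d_mul h hφ ha hb
  intro d
  induction d with
  | zero =>
    intro jj hrjj hjjn v
    refine ⟨{op (φ ((bar (0 : Fin n → ℤ) : R))) • v}, ?_⟩
    intro t ht
    have ht0 : t = 0 := funext fun i => ht i (by omega)
    rw [ht0]
    exact dspan_gen h0D h1D (Finset.mem_singleton_self _)
  | succ d IH =>
    intro jj hrjj hjjn v
    have hjjlt : jj < n := by omega
    set j : Fin n := ⟨jj, hjjlt⟩ with hjdef
    obtain ⟨β, hβ, hβ0, hβv⟩ := torsion_transfer h hφ hψ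
      (stdSub_le_coordSub_tgaIdx (j := j)) (hTor j hrjj) v
    obtain ⟨K₀, γ, hγC, hβeq⟩ := tga_decomp h j hβ
    classical
    set K := K₀.filter (fun k => γ k ≠ 0) with hKdef
    have hβeq' : β = ∑ k ∈ K, γ k * (bar (Pi.single j k) : R) := by
      rw [hβeq]
      refine (Finset.sum_subset (Finset.filter_subset _ _) fun k hk hnk => ?_).symm
      have : γ k = 0 := by
        by_contra hne
        exact hnk (Finset.mem_filter.2 ⟨hk, hne⟩)
      rw [this, zero_mul]
    have hK : K.Nonempty := by
      rcases Finset.eq_empty_or_nonempty K with hemp | hne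
      · exfalso; exact hβ0 (by rw [hβeq', hemp, Finset.sum_empty])
      · exact hne
    have hγ0' : ∀ k ∈ K, γ k ≠ 0 := fun k hk => (Finset.mem_filter.1 hk).2
    have hγC' : ∀ k ∈ K, γ k ∈ tgaSpan F bar (stdSub n r) := fun k _ => hγC k
    have hrel : ∑ k ∈ K, op (φ (γ k * (bar (Pi.single j k) : R))) • v = 0 := by
      have hφβ : φ β = ∑ k ∈ K, φ (γ k * (bar (Pi.single j k) : R)) := by
        rw [hβeq', map_sum]
      calc ∑ k ∈ K, op (φ (γ k * (bar (Pi.single j k) : R))) • v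
          = op (φ β) • v := by
            rw [hφβ]
            rw [← Finset.sum_smul]
            congr 1
            exact (map_sum (MulOpposite.opAddEquiv (α := R')).toAddMonoidHom _ _).symm
        _ = 0 := hβv
    have hred := tga_reduce h hφ v j K hK γ hγC' hγ0' hrel
    choose Gfun hGfun using fun (l : ℤ) =>
      IH (jj + 1) (by omega) (by omega) (op (φ ((bar (Pi.single j l) : R))) • v)
    set Gbig : Finset M' := (Finset.Ico (K.min' hK) (K.max' hK)).biUnion
      (fun l => Gfun l) with hGbigdef
    refine ⟨Gbig, ?_⟩
    intro t ht
    set k0 : ℤ := t j with hk0def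
    set t' : Fin n → ℤ := t - Pi.single j k0 with ht'def
    have ht' : ∀ i : Fin n, (i : ℕ) < jj + 1 → t' i = 0 := by
      intro i hi
      by_cases hij : i = j
      · subst hij
        simp [ht'def, hk0def]
      · have hilt : (i : ℕ) < jj := by
          have : (i : ℕ) ≠ jj := fun hc => hij (Fin.ext hc)
          omega
        simp [ht'def, Pi.single_eq_of_ne hij, ht i hilt]
    have htsplit : Pi.single j k0 + t' = t := by
      rw [ht'def, add_sub_cancel]
    have hbar2 : (bar t : R) = (bar (Pi.single j k0) : R)
        * ((bar t' : R) * ((τ (Pi.single j k0) t')⁻¹ • (1 : R))) := by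
      rw [mul_smul_comm, mul_one, mul_smul_comm, h.mul_bar, htsplit, smul_smul,
        inv_mul_cancel₀ (h.τ_ne_zero _ _), one_smul]
    have hc0C : (τ (Pi.single j k0) t')⁻¹ • (1 : R) ∈ tgaSpan F bar (stdSub n r) :=
      Submodule.smul_mem _ _ (one_mem_tgaSpan h _)
    have hsplit2 : op (φ ((bar t : R))) • v
        = op (φ ((τ (Pi.single j k0) t')⁻¹ • (1 : R)))
            • (op (φ ((bar t' : R))) • (op (φ ((bar (Pi.single j k0) : R))) • v)) := by
      rw [← mul_smul, ← mul_smul, ← op_mul, ← op_mul, ← map_mul, ← map_mul, ← hbar2]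
    rw [hsplit2]
    have hgen : ∀ g ∈ (Finset.Ico (K.min' hK) (K.max' hK)).image
        (fun l => op (φ ((bar (Pi.single j l) : R))) • v),
        op (φ ((bar t' : R))) • g ∈
          DSpan (quotDivisionRing (tgaSpan F bar (stdSub n r) : Set R) φ) Gbig := by
      intro g hg
      obtain ⟨l, hl, rfl⟩ := Finset.mem_image.1 hg
      exact dspan_mono h0D (Finset.subset_biUnion_of_mem _ hl) (hGfun l t' ht')
    have h2 : op (φ ((bar t' : R)))
        • (op (φ ((bar (Pi.single j k0) : R))) • v) ∈
          DSpan (quotDivisionRing (tgaSpan F bar (stdSub n r) : Set R) φ) Gbig :=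
      dspan_translate hmulD h0D haddD (fun d' hd' => d_push h hφ hd' t') hgen (hred k0)
    exact dspan_smul hmulD h2 (d_phi h hφ hc0C)

end MainAux
/-- **Lemma.** Let `M` be a finitely generated right `F∗A`-module with `gk(M) = r`
(`0 < r < n`) that is not `F∗⟨x₁,…,x_r⟩`-torsion, let `S = F∗⟨x₁,…,x_r⟩∖{0}` and let
`D = F(x₁,…,x_r)` be the quotient division ring of `F∗⟨x₁,…,x_r⟩`, so that the Ore
localization `(F∗A)S⁻¹` is the crossed product `D∗⟨x_{r+1},…,x_n⟩`.  Then the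
localization `M S⁻¹` is a nonzero module that is finite dimensional as a `D`-vector
space. -/
theorem localization_nonzero_and_finiteDimensional {F : Type u} [Field F] {n : ℕ}
    {R : Type u} [Ring R] [Algebra F R]
    {bar : (Fin n → ℤ) → Rˣ} {τ : (Fin n → ℤ) → (Fin n → ℤ) → F}
    (h : IsTwistedGroupAlgebra F R bar τ)
    (M : Type u) [AddCommGroup M] [Module Rᵐᵒᵖ M] [Module.Finite Rᵐᵒᵖ M]
    (r : ℕ) (hgk : gkTGA F bar M = r) (h0 : 0 < r) (hrn : r < n)
    (htor : ¬ IsTorsionOverSub F bar (stdSub n r) M)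
    -- the Ore localization `R' = (F∗A)S⁻¹` at `S = F∗⟨x₁,…,x_r⟩∖{0}` :
    (R' : Type u) [Ring R'] (φ : R →+* R')
    (hφ : IsOreLocalizationData (tgaSpan F bar (stdSub n r) : Set R) φ)
    -- the corresponding localization `M' = M S⁻¹` of `M` :
    (M' : Type u) [AddCommGroup M'] [Module R'ᵐᵒᵖ M'] (ψ : M →+ M')
    (hψ : IsOreModuleLocalizationData (tgaSpan F bar (stdSub n r) : Set R) φ ψ) :
    Nontrivial M' ∧
      ∃ (k : ℕ) (g : Fin k → M'), ∀ m' : M', ∃ c : Fin k → R',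
        (∀ i, c i ∈ quotDivisionRing (tgaSpan F bar (stdSub n r) : Set R) φ) ∧
        m' = ∑ i, op (c i) • g i := by
  classical
  constructor
  · -- nontriviality of the localization
    rw [IsTorsionOverSub] at htor
    push_neg at htor
    obtain ⟨m, hm⟩ := htor
    have hψm : ψ m ≠ 0 := by
      intro h0
      obtain ⟨s, hs, hs0, hsm⟩ := (hψ.ker m).1 h0
      exact (hm s hs hs0) hsm
    exact ⟨ψ m, 0, hψm⟩
  · -- finite generation over the quotient division ring
    have h0D := d_zero h hφ
    have haddD : ∀ a ∈ quotDivisionRing (tgaSpan F bar (stdSub n r) : Set R) φ,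
        ∀ b ∈ quotDivisionRing (tgaSpan F bar (stdSub n r) : Set R) φ,
        a + b ∈ quotDivisionRing (tgaSpan F bar (stdSub n r) : Set R) φ :=
      fun a ha b hb => d_add h hφ ha hb
    have hmulD : ∀ a ∈ quotDivisionRing (tgaSpan F bar (stdSub n r) : Set R) φ,
        ∀ b ∈ quotDivisionRing (tgaSpan F bar (stdSub n r) : Set R) φ,
        a * b ∈ quotDivisionRing (tgaSpan F bar (stdSub n r) : Set R) φ :=
      fun a ha b hb => d_mul h hφ ha hb
    -- torsion in every extra coordinate direction
    have hTor : ∀ j : Fin n, r ≤ (j : ℕ) →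
        IsTorsionOverSub F bar (coordSub n (tgaIdx r j)) M := by
      intro j hj
      by_contra hnt
      have hle := rank_le_of_not_torsion (bar := bar) hgk h0 hnt
      rw [rk_coordSub, card_tgaIdx hj (le_of_lt hrn)] at hle
      omega
    -- a finite generating set of `M`
    obtain ⟨T0, hT0⟩ := Module.Finite.fg_top (R := Rᵐᵒᵖ) (M := M)
    have hmain := fun (v : M') =>
      tga_main h hφ hψ hTor (n - r) r (le_refl r) (by omega) v
    choose Gfun hGfun using hmain
    set Gstar : Finset M' := T0.biUnion (fun m0 => Gfun (ψ m0)) with hGstardef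
    have hspan : ∀ m' : M', m' ∈
        DSpan (quotDivisionRing (tgaSpan F bar (stdSub n r) : Set R) φ) Gstar := by
      intro m'
      obtain ⟨m, s, hs, hs0, rfl⟩ := hψ.surj m'
      have hm : m ∈ Submodule.span Rᵐᵒᵖ (T0 : Set M) := by rw [hT0]; trivial
      obtain ⟨f, -, hf⟩ := Submodule.mem_span_finset.1 hm
      have hψm : ψ m = ∑ m0 ∈ T0, op (φ (f m0).unop) • ψ m0 := by
        rw [← hf, map_sum]
        refine Finset.sum_congr rfl fun m0 _ => ?_
        have : f m0 • m0 = op ((f m0).unop) • m0 := by rw [op_unop]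
        rw [this, hψ.semilinear]
      rw [hψm, Finset.smul_sum]
      refine dspan_sum h0D haddD _ _ fun m0 hm0 => ?_
      rw [← mul_smul, ← op_mul]
      set a : R := (f m0).unop with hadef
      have ha : a = ∑ e ∈ ((tgaBasis h).repr a).support,
          ((tgaBasis h).repr a) e • (bar e : R) := by
        conv_lhs => rw [← (tgaBasis h).linearCombination_repr a]
        rw [Finsupp.linearCombination_apply, Finsupp.sum, coe_tgaBasis h]
      have hexp : φ a * Ring.inverse (φ s) = ∑ e ∈ ((tgaBasis h).repr a).support,
          φ (((tgaBasis h).repr a) e • (bar e : R)) * Ring.inverse (φ s) := by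
        conv_lhs => rw [ha]
        rw [map_sum, Finset.sum_mul]
      have hopsum : op (∑ e ∈ ((tgaBasis h).repr a).support,
          φ (((tgaBasis h).repr a) e • (bar e : R)) * Ring.inverse (φ s))
          = ∑ e ∈ ((tgaBasis h).repr a).support,
            op (φ (((tgaBasis h).repr a) e • (bar e : R)) * Ring.inverse (φ s)) :=
        map_sum (MulOpposite.opAddEquiv (α := R')).toAddMonoidHom _ _
      rw [hexp, hopsum, Finset.sum_smul]
      refine dspan_sum h0D haddD _ _ fun e he => ?_
      -- split the basis monomial into a `C`-part and a tail monomial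
      have hhd : e - tgaTl r e ∈ stdSub n r := by
        intro i hi
        simp [tgaTl, not_lt.2 hi]
      have htl : ∀ i : Fin n, (i : ℕ) < r → tgaTl r e i = 0 := by
        intro i hi
        simp [tgaTl, hi]
      set ce : R := ((((tgaBasis h).repr a) e) * (τ (e - tgaTl r e) (tgaTl r e))⁻¹)
          • (bar (e - tgaTl r e) : R) with hcedef
      have hceC : ce ∈ tgaSpan F bar (stdSub n r) :=
        Submodule.smul_mem _ _ (bar_mem_tgaSpan hhd)
      have hsplitbar : (((tgaBasis h).repr a) e) • (bar e : R)
          = ce * (bar (tgaTl r e) : R) := by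
        rw [hcedef, smul_mul_assoc, h.mul_bar, sub_add_cancel, smul_smul, mul_assoc,
          inv_mul_cancel₀ (h.τ_ne_zero _ _), mul_one]
      -- commute the inverse past the tail monomial
      have hcomm : φ ((bar (tgaTl r e) : R)) * Ring.inverse (φ s)
          = Ring.inverse (φ ((bar (tgaTl r e) : R) * s * ↑(bar (tgaTl r e))⁻¹))
            * φ ((bar (tgaTl r e) : R)) := phi_bar_inv_comm h hφ hs hs0 _
      set s' : R := (bar (tgaTl r e) : R) * s * ↑(bar (tgaTl r e))⁻¹ with hs'def
      have hs'C : s' ∈ tgaSpan F bar (stdSub n r) := conj_mem_tgaSpan h _ hs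
      have hs'0 : s' ≠ 0 := conj_unit_ne_zero hs0
      have hd : φ ce * Ring.inverse (φ s')
          ∈ quotDivisionRing (tgaSpan F bar (stdSub n r) : Set R) φ :=
        ⟨ce, hceC, s', hs'C, hs'0, rfl⟩
      have hterm : φ ((((tgaBasis h).repr a) e) • (bar e : R)) * Ring.inverse (φ s)
          = (φ ce * Ring.inverse (φ s')) * φ ((bar (tgaTl r e) : R)) := by
        rw [hsplitbar, map_mul, mul_assoc, hcomm, ← mul_assoc]
      rw [hterm]
      obtain ⟨d', hd', hdu⟩ := d_push h hφ hd (tgaTl r e)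
      rw [hdu, op_mul, mul_smul]
      have hbase : op (φ ((bar (tgaTl r e) : R))) • ψ m0 ∈
          DSpan (quotDivisionRing (tgaSpan F bar (stdSub n r) : Set R) φ) Gstar :=
        dspan_mono h0D (Finset.subset_biUnion_of_mem _ hm0) (hGfun (ψ m0) (tgaTl r e) htl)
      exact dspan_smul hmulD hbase hd'
    -- extract the finite presentation
    refine ⟨Gstar.card, fun i => (Gstar.equivFin.symm i : M'), fun m' => ?_⟩
    obtain ⟨c, hc, hrep⟩ := hspan m'
    refine ⟨fun i => c ((Gstar.equivFin.symm i : M')),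
      fun i => hc _ (Finset.coe_mem _), ?_⟩
    rw [hrep]
    calc ∑ g ∈ Gstar, op (c g) • g
        = ∑ x : {x // x ∈ Gstar}, op (c (x : M')) • (x : M') := by
          rw [Finset.sum_coe_sort Gstar (fun g => op (c g) • g)]
      _ = ∑ i, op (c ((Gstar.equivFin.symm i : M'))) • (Gstar.equivFin.symm i : M') :=
          (Equiv.sum_comp Gstar.equivFin.symm
            (fun x : {x // x ∈ Gstar} => op (c (x : M')) • (x : M'))).symm
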